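/- Let P(m) be the natural unit interval order on [n] induced by m = (2, m_2, m_3, n, ..., n) with 2 incomparable to 3 and 3 incomparable to 4, and let G be its incomparability graph. Then there is a weight-preserving injection from the set of P(m)-tableaux of shape (3,2,1^{n-5}) into the set of P(m)-tableaux of shape (3,1^{n-3}); consequently, for every j the number of tableaux of shape (3,2,1^{n-5}) with j G-inversions is at most the number of tableaux of shape (3,1^{n-3}) with j G-inversions. -/
import Mathlib


/-- The order relation of the natural unit interval order `P(m)` on `{1, …, n}`:
`i <_P j` iff `m i < j`. -/
def ltP (m : ℕ → ℕ) (i j : ℕ) : Prop := m i < j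

/-- `u` and `v` are incomparable in `P(m)` (an edge of the incomparability graph). -/
def Incomp (m : ℕ → ℕ) (u v : ℕ) : Prop := u ≠ v ∧ ¬ ltP m u v ∧ ¬ ltP m v u

/-- `m` encodes a natural unit interval order `P(m)` on `{1, …, n}` induced by the sequence
`(2, m 2, m 3, n, …, n)`: `m 1 = 2`; `i ≤ m i ≤ n` for `1 ≤ i ≤ n`; `m` is nondecreasing on
`{1, …, n}`; and `m i = n` for `4 ≤ i ≤ n`. -/
def SeqHyp (n : ℕ) (m : ℕ → ℕ) : Prop :=
  m 1 = 2 ∧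
  (∀ i, 1 ≤ i → i ≤ n → i ≤ m i ∧ m i ≤ n) ∧
  (∀ i j, 1 ≤ i → i ≤ j → j ≤ n → m i ≤ m j) ∧
  (∀ i, 4 ≤ i → i ≤ n → m i = n)

/-- A `P(m)`-tableau of shape `sh` (a partition of `n`, given as a nonincreasing list of row
lengths): a filling of the cells `(i, j)` with `j < sh[i]` by the elements `1, …, n`, each
appearing exactly once, with rows strictly increasing in `<_P` and entries in consecutive rows
of a column pairwise non-decreasing (`¬ b <_P a` whenever `a` is immediately above `b`).
Cells outside the shape carry the junk value `0`. -/
structure PTab (n : ℕ) (m : ℕ → ℕ) (sh : List ℕ) where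
  entry : ℕ → ℕ → ℕ
  zero_outside : ∀ i j, sh.getD i 0 ≤ j → entry i j = 0
  mem_inside : ∀ i j, j < sh.getD i 0 → entry i j ∈ Finset.Icc 1 n
  inj : ∀ i j i' j', j < sh.getD i 0 → j' < sh.getD i' 0 →
    entry i j = entry i' j' → i = i' ∧ j = j'
  surj : ∀ v ∈ Finset.Icc 1 n, ∃ i j, j < sh.getD i 0 ∧ entry i j = v
  rows : ∀ i j j', j < j' → j' < sh.getD i 0 → ltP m (entry i j) (entry i j')
  cols : ∀ i j, j < sh.getD (i + 1) 0 → ¬ ltP m (entry (i + 1) j) (entry i j)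

/-- The number of `G`-inversions of a `P(m)`-tableau: pairs of cells carrying incomparable
values `u < v` with `u` in a strictly higher row than `v`. -/
noncomputable def invG {n : ℕ} {m : ℕ → ℕ} {sh : List ℕ} (T : PTab n m sh) : ℕ :=
  Nat.card {c : (ℕ × ℕ) × (ℕ × ℕ) //
    c.1.2 < sh.getD c.1.1 0 ∧ c.2.2 < sh.getD c.2.1 0 ∧
    c.1.1 < c.2.1 ∧
    T.entry c.1.1 c.1.2 < T.entry c.2.1 c.2.2 ∧
    Incomp m (T.entry c.1.1 c.1.2) (T.entry c.2.1 c.2.2)}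

/-! ### Auxiliary material -/

lemma PTab.ext' {n m sh} {T T' : PTab n m sh} (h : T.entry = T'.entry) : T = T' := by
  cases T; cases T'; cases h; rfl

lemma ptab_finite (n : ℕ) (m : ℕ → ℕ) (sh : List ℕ) : Finite (PTab n m sh) := by
  have hb : ∀ (T : PTab n m sh) (i j : ℕ), T.entry i j < n + 1 := by
    intro T i j
    by_cases h : j < sh.getD i 0
    · have := T.mem_inside i j h
      simp only [Finset.mem_Icc] at this; omega
    · rw [T.zero_outside i j (by omega)]; omega
  let f : PTab n m sh → (Fin sh.length × Fin sh.sum → Fin (n + 1)) := fun T p =>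
    ⟨T.entry p.1 p.2, hb T p.1 p.2⟩
  have hf : Function.Injective f := by
    intro T T' h
    apply PTab.ext'
    funext i j
    by_cases hij : j < sh.getD i 0
    · have hi : i < sh.length := by
        by_contra hi
        push_neg at hi
        rw [List.getD_eq_default sh 0 hi] at hij; omega
      have hj : j < sh.sum := by
        have hmem : sh.getD i 0 ∈ sh := by
          rw [List.getD_eq_getElem sh 0 hi]; exact List.getElem_mem hi
        have := List.single_le_sum (fun y (_ : y ∈ sh) => Nat.zero_le y) _ hmem
        omega
      simpa [f] using congrArg Fin.val (congrFun h (⟨i, hi⟩, ⟨j, hj⟩))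
    · rw [T.zero_outside i j (by omega), T'.zero_outside i j (by omega)]
  exact Finite.of_injective f hf

abbrev shA (n : ℕ) : List ℕ := 3 :: 2 :: List.replicate (n - 5) 1
abbrev shB (n : ℕ) : List ℕ := 3 :: List.replicate (n - 3) 1

lemma replicate_getD (k i : ℕ) : (List.replicate k (1:ℕ)).getD i 0 = if i < k then 1 else 0 := by
  simp [List.getD_eq_getElem?_getD, List.getElem?_replicate]
  split <;> simp

lemma cellA (n i j : ℕ) : j < (shA n).getD i 0 ↔
    (i = 0 ∧ j < 3) ∨ (i = 1 ∧ j < 2) ∨ (2 ≤ i ∧ i < n - 3 ∧ j = 0) := by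
  match i with
  | 0 => simp
  | 1 => simp [shA]
  | (k+2) =>
    simp only [shA, List.getD_cons_succ, replicate_getD]
    split <;> omega

lemma cellB (n i j : ℕ) : j < (shB n).getD i 0 ↔
    (i = 0 ∧ j < 3) ∨ (1 ≤ i ∧ i < n - 2 ∧ j = 0) := by
  match i with
  | 0 => simp
  | (k+1) =>
    simp only [shB, List.getD_cons_succ, replicate_getD]
    split <;> omega

lemma not_ltP_rev {n : ℕ} {m : ℕ → ℕ} (hm : SeqHyp n m) {u v : ℕ}
    (hu : u ∈ Finset.Icc 1 n) (hv : v ∈ Finset.Icc 1 n) (h : ltP m u v) : ¬ ltP m v u := by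
  obtain ⟨_, hm2, _, _⟩ := hm
  simp only [Finset.mem_Icc] at hu hv
  have h1 := (hm2 u hu.1 hu.2).1
  have h2 := (hm2 v hv.1 hv.2).1
  simp only [ltP] at *
  omega

lemma key {n : ℕ} {m : ℕ → ℕ} (hn : 5 ≤ n) (hm : SeqHyp n m)
    (h23 : 3 ≤ m 2) (h34 : 4 ≤ m 3) (T : PTab n m (shA n)) :
    ltP m (T.entry 1 0) (T.entry 1 1) ∧
    (2 < n - 3 → ¬ ltP m (T.entry 2 0) (T.entry 1 1)) := by
  obtain ⟨hm1, hm2, hm3, hm4⟩ := hm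
  have bnd : ∀ i j, j < (shA n).getD i 0 → 1 ≤ T.entry i j ∧ T.entry i j ≤ n := by
    intro i j h
    have := T.mem_inside i j h
    simpa [Finset.mem_Icc] using this
  have c00 : (0:ℕ) < (shA n).getD 0 0 := by rw [cellA]; omega
  have c01 : (1:ℕ) < (shA n).getD 0 0 := by rw [cellA]; omega
  have c02 : (2:ℕ) < (shA n).getD 0 0 := by rw [cellA]; omega
  have c10 : (0:ℕ) < (shA n).getD 1 0 := by rw [cellA]; omega
  have c11 : (1:ℕ) < (shA n).getD 1 0 := by rw [cellA]; omega
  have hx := bnd 0 0 c00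
  have hy := bnd 0 1 c01
  have hz := bnd 0 2 c02
  have ha := bnd 1 0 c10
  have hb := bnd 1 1 c11
  have hxy : ltP m (T.entry 0 0) (T.entry 0 1) := T.rows 0 0 1 (by omega) c01
  have hyz : ltP m (T.entry 0 1) (T.entry 0 2) := T.rows 0 1 2 (by omega) c02
  have hab : ltP m (T.entry 1 0) (T.entry 1 1) := T.rows 1 0 1 (by omega) c11
  refine ⟨hab, ?_⟩
  simp only [ltP] at hxy hyz hab
  have hy3 : T.entry 0 1 ≤ 3 := by
    by_contra h
    push_neg at h
    have := hm4 (T.entry 0 1) (by omega) hy.2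
    omega
  have hmx1 : T.entry 0 0 ≤ m (T.entry 0 0) := (hm2 _ hx.1 hx.2).1
  have hx1 : T.entry 0 0 = 1 := by
    rcases (by omega : T.entry 0 0 = 1 ∨ T.entry 0 0 = 2) with h | h
    · exact h
    · rw [h] at hxy; omega
  have hy3' : T.entry 0 1 = 3 := by
    rw [hx1, hm1] at hxy; omega
  have ha3 : T.entry 1 0 ≤ 3 := by
    by_contra h
    push_neg at h
    have := hm4 (T.entry 1 0) (by omega) ha.2
    omega
  have hax : T.entry 1 0 ≠ T.entry 0 0 := by
    intro h
    have := T.inj 1 0 0 0 c10 c00 h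
    omega
  have hay : T.entry 1 0 ≠ T.entry 0 1 := by
    intro h
    have := T.inj 1 0 0 1 c10 c01 h
    omega
  have ha2 : T.entry 1 0 = 2 := by omega
  intro h6
  have c20 : (0:ℕ) < (shA n).getD 2 0 := by rw [cellA]; omega
  have hc := bnd 2 0 c20
  have hcx : T.entry 2 0 ≠ T.entry 0 0 := by
    intro h; have := T.inj 2 0 0 0 c20 c00 h; omega
  have hcy : T.entry 2 0 ≠ T.entry 0 1 := by
    intro h; have := T.inj 2 0 0 1 c20 c01 h; omega
  have hca : T.entry 2 0 ≠ T.entry 1 0 := by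
    intro h; have := T.inj 2 0 1 0 c20 c10 h; omega
  have hc4 : 4 ≤ T.entry 2 0 := by omega
  have := hm4 (T.entry 2 0) hc4 hc.2
  simp only [ltP]
  omega

def ρcell (d : ℕ × ℕ) : ℕ × ℕ :=
  (if d.1 ≤ 1 then d.1 else if d.1 = 2 then 1 else d.1 - 1,
   if d.1 = 2 then 1 else d.2)

def φcell (c : ℕ × ℕ) : ℕ × ℕ :=
  (if c.1 = 0 then 0 else if c.1 = 1 ∧ c.2 = 0 then 1 else if c.1 = 1 then 2 else c.1 + 1,
   if c.1 = 1 ∧ c.2 = 1 then 0 else c.2)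

lemma φcell_0 (j : ℕ) : φcell (0, j) = (0, j) := by simp [φcell]
lemma φcell_10 : φcell (1, 0) = (1, 0) := by simp [φcell]
lemma φcell_11 : φcell (1, 1) = (2, 0) := by simp [φcell]
lemma φcell_ge2 {i : ℕ} (h : 2 ≤ i) (j : ℕ) : φcell (i, j) = (i + 1, j) := by
  simp only [φcell]
  rw [if_neg (by omega), if_neg (by omega), if_neg (by omega), if_neg (by omega)]

lemma ρcell_le1 {i : ℕ} (h : i ≤ 1) (j : ℕ) : ρcell (i, j) = (i, j) := by
  simp only [ρcell]
  rw [if_pos h, if_neg (by omega)]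

lemma ρcell_2 (j : ℕ) : ρcell (2, j) = (1, 1) := by simp [ρcell]

lemma ρcell_ge3 {i : ℕ} (h : 3 ≤ i) (j : ℕ) : ρcell (i, j) = (i - 1, j) := by
  simp only [ρcell]
  rw [if_neg (by omega), if_neg (by omega), if_neg (by omega)]

lemma rho_phi {n i j : ℕ} (h : j < (shA n).getD i 0) : ρcell (φcell (i, j)) = (i, j) := by
  rw [cellA] at h
  rcases h with ⟨h1, h2⟩ | ⟨h1, h2⟩ | ⟨h1, h2, h3⟩
  · subst h1; rw [φcell_0, ρcell_le1 (by omega)]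
  · subst h1
    interval_cases j
    · rw [φcell_10, ρcell_le1 (by omega)]
    · rw [φcell_11, ρcell_2]
  · subst h3
    rw [φcell_ge2 h1, ρcell_ge3 (by omega)]
    rfl

lemma phi_rho {n i j : ℕ} (h : j < (shB n).getD i 0) : φcell (ρcell (i, j)) = (i, j) := by
  rw [cellB] at h
  rcases h with ⟨h1, h2⟩ | ⟨h1, h2, h3⟩
  · subst h1; rw [ρcell_le1 (by omega), φcell_0]
  · subst h3
    match i, h1 with
    | 1, _ => rw [ρcell_le1 (by omega), φcell_10]
    | 2, _ => rw [ρcell_2, φcell_11]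
    | (k+3), _ =>
      rw [ρcell_ge3 (by omega), φcell_ge2 (by omega)]
      rfl

lemma rho_row_lt {i j i' j' : ℕ} (h : i < i') (hne : ¬(i = 1 ∧ i' = 2)) :
    (ρcell (i, j)).1 < (ρcell (i', j')).1 := by
  simp only [ρcell]
  split_ifs <;> omega

lemma phi_row_lt {i j i' j' : ℕ} (h : i < i') :
    (φcell (i, j)).1 < (φcell (i', j')).1 := by
  simp only [φcell]
  split_ifs <;> omega

def ψentry {n : ℕ} {m : ℕ → ℕ} (T : PTab n m (shA n)) : ℕ → ℕ → ℕ := fun i j =>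
  if i = 0 then T.entry 0 j
  else if j = 0 then
    (if i = 1 then T.entry 1 0 else if i = 2 then T.entry 1 1 else T.entry (i - 1) 0)
  else 0

lemma ψentry_0 {n : ℕ} {m : ℕ → ℕ} (T : PTab n m (shA n)) (j : ℕ) :
    ψentry T 0 j = T.entry 0 j := by simp [ψentry]
lemma ψentry_1 {n : ℕ} {m : ℕ → ℕ} (T : PTab n m (shA n)) :
    ψentry T 1 0 = T.entry 1 0 := by simp [ψentry]
lemma ψentry_2 {n : ℕ} {m : ℕ → ℕ} (T : PTab n m (shA n)) :
    ψentry T 2 0 = T.entry 1 1 := by simp [ψentry]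
lemma ψentry_ge3 {n : ℕ} {m : ℕ → ℕ} (T : PTab n m (shA n)) {i : ℕ} (h : 3 ≤ i) :
    ψentry T i 0 = T.entry (i - 1) 0 := by
  simp only [ψentry]
  rw [if_neg (by omega), if_pos trivial, if_neg (by omega), if_neg (by omega)]
lemma ψentry_junk {n : ℕ} {m : ℕ → ℕ} (T : PTab n m (shA n)) {i j : ℕ} (hi : i ≠ 0)
    (hj : j ≠ 0) : ψentry T i j = 0 := by
  simp only [ψentry]
  rw [if_neg hi, if_neg hj]

lemma psientry_spec {n : ℕ} {m : ℕ → ℕ} (T : PTab n m (shA n)) {i j : ℕ}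
    (h : j < (shB n).getD i 0) :
    (ρcell (i, j)).2 < (shA n).getD (ρcell (i, j)).1 0 ∧
      ψentry T i j = T.entry (ρcell (i, j)).1 (ρcell (i, j)).2 := by
  rw [cellB] at h
  rcases h with ⟨h1, h2⟩ | ⟨h1, h2, h3⟩
  · subst h1
    rw [ρcell_le1 (by omega)]
    exact ⟨by rw [cellA]; omega, ψentry_0 T j⟩
  · subst h3
    match i, h1 with
    | 1, _ =>
      rw [ρcell_le1 (by omega)]
      exact ⟨by rw [cellA]; omega, ψentry_1 T⟩
    | 2, _ =>
      rw [ρcell_2]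
      exact ⟨by rw [cellA]; omega, ψentry_2 T⟩
    | (k+3), _ =>
      rw [ρcell_ge3 (by omega)]
      exact ⟨by rw [cellA]; omega, ψentry_ge3 T (by omega)⟩

lemma cellB_of_cellA {n i j : ℕ} (hn : 5 ≤ n) (h : j < (shA n).getD i 0) :
    (φcell (i, j)).2 < (shB n).getD (φcell (i, j)).1 0 := by
  rw [cellA] at h
  rcases h with ⟨h1, h2⟩ | ⟨h1, h2⟩ | ⟨h1, h2, h3⟩
  · subst h1; rw [φcell_0]; rw [cellB]; omega
  · subst h1
    interval_cases j
    · rw [φcell_10]; rw [cellB]; omega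
    · rw [φcell_11]; rw [cellB]; omega
  · subst h3; rw [φcell_ge2 h1]; rw [cellB]; omega

lemma psientry_phi {n : ℕ} {m : ℕ → ℕ} (T : PTab n m (shA n)) {i j : ℕ} (hn : 5 ≤ n)
    (hc : j < (shA n).getD i 0) :
    ψentry T (φcell (i, j)).1 (φcell (i, j)).2 = T.entry i j := by
  obtain ⟨_, he⟩ := psientry_spec T (cellB_of_cellA hn hc)
  rw [Prod.mk.eta, rho_phi hc] at he
  exact he

def psi {n : ℕ} {m : ℕ → ℕ} (hn : 5 ≤ n) (hm : SeqHyp n m) (h23 : 3 ≤ m 2) (h34 : 4 ≤ m 3)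
    (T : PTab n m (shA n)) : PTab n m (shB n) where
  entry := ψentry T
  zero_outside := by
    intro i j h
    by_cases hi : i = 0
    · subst hi
      rw [ψentry_0]
      exact T.zero_outside 0 j h
    · by_cases hj : j = 0
      · subst hj
        have hcell : ¬ ((i = 0 ∧ (0:ℕ) < 3) ∨ (1 ≤ i ∧ i < n - 2 ∧ (0:ℕ) = 0)) := by
          rw [← cellB]; omega
        have hi3 : 3 ≤ i := by omega
        have hin : n - 2 ≤ i := by omega
        rw [ψentry_ge3 T hi3]
        apply T.zero_outside
        by_contra hlt
        push_neg at hlt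
        rw [cellA] at hlt
        omega
      · exact ψentry_junk T hi hj
  mem_inside := by
    intro i j h
    obtain ⟨hc, he⟩ := psientry_spec T h
    rw [he]
    exact T.mem_inside _ _ hc
  inj := by
    intro i j i' j' h h' heq
    obtain ⟨hc, he⟩ := psientry_spec T h
    obtain ⟨hc', he'⟩ := psientry_spec T h'
    rw [he, he'] at heq
    obtain ⟨e1, e2⟩ := T.inj _ _ _ _ hc hc' heq
    have hr : ρcell (i, j) = ρcell (i', j') := by
      rw [Prod.ext_iff]; exact ⟨e1, e2⟩
    have h2 := phi_rho h
    have h2' := phi_rho h'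
    have : (i, j) = (i', j') := by rw [← h2, ← h2', hr]
    exact ⟨congrArg Prod.fst this, congrArg Prod.snd this⟩
  surj := by
    intro v hv
    obtain ⟨i, j, hc, he⟩ := T.surj v hv
    refine ⟨(φcell (i, j)).1, (φcell (i, j)).2, cellB_of_cellA hn hc, ?_⟩
    rw [psientry_phi T hn hc]
    exact he
  rows := by
    intro i j j' hjj' h
    have hcb := (cellB n i j').mp h
    rcases hcb with ⟨h1, h2⟩ | ⟨_, _, h3⟩
    · subst h1
      rw [ψentry_0, ψentry_0]
      exact T.rows 0 j j' hjj' (by rw [cellA]; omega)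
    · omega
  cols := by
    intro i j h
    have hcb := (cellB n (i+1) j).mp h
    have hj0 : j = 0 := by omega
    subst hj0
    match i with
    | 0 =>
      rw [ψentry_1, ψentry_0]
      exact T.cols 0 0 (by rw [cellA]; omega)
    | 1 =>
      rw [ψentry_2, ψentry_1]
      exact not_ltP_rev hm (T.mem_inside 1 0 (by rw [cellA]; omega))
        (T.mem_inside 1 1 (by rw [cellA]; omega)) (key hn hm h23 h34 T).1
    | 2 =>
      rw [ψentry_ge3 T (by omega), ψentry_2]
      exact (key hn hm h23 h34 T).2 (by omega)
    | (k+3) =>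
      rw [ψentry_ge3 T (by omega : 3 ≤ k + 3 + 1), ψentry_ge3 T (by omega : 3 ≤ k + 3)]
      have := T.cols (k+2) 0 (by rw [cellA]; omega)
      exact this

lemma psi_inj {n : ℕ} {m : ℕ → ℕ} (hn : 5 ≤ n) (hm : SeqHyp n m) (h23 : 3 ≤ m 2)
    (h34 : 4 ≤ m 3) : Function.Injective (psi hn hm h23 h34) := by
  intro T T' h
  apply PTab.ext'
  funext i j
  by_cases hc : j < (shA n).getD i 0
  · have he : ψentry T = ψentry T' := congrArg PTab.entry h
    rw [← psientry_phi T hn hc, ← psientry_phi T' hn hc, he]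
  · rw [T.zero_outside i j (by omega), T'.zero_outside i j (by omega)]

lemma invG_psi {n : ℕ} {m : ℕ → ℕ} (hn : 5 ≤ n) (hm : SeqHyp n m) (h23 : 3 ≤ m 2)
    (h34 : 4 ≤ m 3) (T : PTab n m (shA n)) : invG (psi hn hm h23 h34 T) = invG T := by
  have hF : ∀ (i1 j1 i2 j2 : ℕ),
      (j1 < (shB n).getD i1 0 ∧ j2 < (shB n).getD i2 0 ∧ i1 < i2 ∧
        ψentry T i1 j1 < ψentry T i2 j2 ∧ Incomp m (ψentry T i1 j1) (ψentry T i2 j2)) →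
      ((ρcell (i1, j1)).2 < (shA n).getD (ρcell (i1, j1)).1 0 ∧
        (ρcell (i2, j2)).2 < (shA n).getD (ρcell (i2, j2)).1 0 ∧
        (ρcell (i1, j1)).1 < (ρcell (i2, j2)).1 ∧
        T.entry (ρcell (i1, j1)).1 (ρcell (i1, j1)).2
          < T.entry (ρcell (i2, j2)).1 (ρcell (i2, j2)).2 ∧
        Incomp m (T.entry (ρcell (i1, j1)).1 (ρcell (i1, j1)).2)
          (T.entry (ρcell (i2, j2)).1 (ρcell (i2, j2)).2)) := by
    intro i1 j1 i2 j2 ⟨h1, h2, h12, hlt, hinc⟩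
    obtain ⟨hc1, he1⟩ := psientry_spec T h1
    obtain ⟨hc2, he2⟩ := psientry_spec T h2
    rw [he1, he2] at hlt hinc
    refine ⟨hc1, hc2, ?_, hlt, hinc⟩
    by_cases hne : i1 = 1 ∧ i2 = 2
    · exfalso
      obtain ⟨e1, e2⟩ := hne
      subst e1; subst e2
      have hj1 : j1 = 0 := by have := (cellB n 1 j1).mp h1; omega
      have hj2 : j2 = 0 := by have := (cellB n 2 j2).mp h2; omega
      subst hj1; subst hj2
      rw [ρcell_le1 (by omega) 0, ρcell_2 0] at hinc
      exact hinc.2.1 (key hn hm h23 h34 T).1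
    · exact rho_row_lt h12 hne
  refine Nat.card_eq_of_bijective
    (fun s => ⟨(ρcell s.val.1, ρcell s.val.2),
      hF s.val.1.1 s.val.1.2 s.val.2.1 s.val.2.2 s.property⟩) ⟨?_, ?_⟩
  · rintro ⟨⟨⟨i1, j1⟩, ⟨i2, j2⟩⟩, hs⟩ ⟨⟨⟨i1', j1'⟩, ⟨i2', j2'⟩⟩, hs'⟩ hh
    have hval := congrArg Subtype.val hh
    simp only [Prod.mk.injEq] at hval
    apply Subtype.ext
    have e1 : (i1, j1) = (i1', j1') := by
      rw [← phi_rho hs.1, ← phi_rho hs'.1, hval.1]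
    have e2 : (i2, j2) = (i2', j2') := by
      rw [← phi_rho hs.2.1, ← phi_rho hs'.2.1, hval.2]
    rw [Prod.ext_iff]
    exact ⟨e1, e2⟩
  · rintro ⟨⟨⟨i1, j1⟩, ⟨i2, j2⟩⟩, h1, h2, h12, hlt, hinc⟩
    have cB1 := cellB_of_cellA hn h1
    have cB2 := cellB_of_cellA hn h2
    have he1 := psientry_phi T hn h1
    have he2 := psientry_phi T hn h2
    dsimp only at h1 h2 h12 hlt hinc cB1 cB2 he1 he2
    refine ⟨⟨(φcell (i1, j1), φcell (i2, j2)), ?_⟩, ?_⟩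
    · refine ⟨cB1, cB2, phi_row_lt h12, ?_, ?_⟩
      · show ψentry T (φcell (i1, j1)).1 (φcell (i1, j1)).2 <
            ψentry T (φcell (i2, j2)).1 (φcell (i2, j2)).2
        rw [he1, he2]; exact hlt
      · show Incomp m (ψentry T (φcell (i1, j1)).1 (φcell (i1, j1)).2)
            (ψentry T (φcell (i2, j2)).1 (φcell (i2, j2)).2)
        rw [he1, he2]; exact hinc
    · apply Subtype.ext
      show (ρcell (φcell (i1, j1)), ρcell (φcell (i2, j2))) = _
      rw [rho_phi h1, rho_phi h2]



/-- For the natural unit interval order `P(m)` on `{1,…,n}` induced by `(2, m₂, m₃, n, …, n)`,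
with `2` incomparable to `3` and `3` incomparable to `4`, there is a weight-preserving
injection from the `P(m)`-tableaux of shape `(3,2,1^{n-5})` into those of shape
`(3,1^{n-3})`; consequently, for every `j` the number of tableaux of shape `(3,2,1^{n-5})`
with `j` `G`-inversions is at most the number of tableaux of shape `(3,1^{n-3})` with `j`
`G`-inversions. -/
theorem ptab_injection_32_to_3 (n : ℕ) (m : ℕ → ℕ) (hn : 5 ≤ n) (hm : SeqHyp n m)
    (h23 : 3 ≤ m 2) (h34 : 4 ≤ m 3) :
    (∃ ψ : PTab n m (3 :: 2 :: List.replicate (n - 5) 1) →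
           PTab n m (3 :: List.replicate (n - 3) 1),
        Function.Injective ψ ∧ ∀ T, invG (ψ T) = invG T) ∧
    ∀ j : ℕ,
      Nat.card {T : PTab n m (3 :: 2 :: List.replicate (n - 5) 1) // invG T = j}
        ≤ Nat.card {T : PTab n m (3 :: List.replicate (n - 3) 1) // invG T = j} := by
  constructor
  · exact ⟨psi hn hm h23 h34, psi_inj hn hm h23 h34, invG_psi hn hm h23 h34⟩
  · intro j
    haveI := ptab_finite n m (3 :: List.replicate (n - 3) 1)
    have hinj : Function.Injective
        (fun (T : {T : PTab n m (3 :: 2 :: List.replicate (n - 5) 1) // invG T = j}) =>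
          (⟨psi hn hm h23 h34 T.val, by rw [invG_psi]; exact T.property⟩ :
            {T : PTab n m (3 :: List.replicate (n - 3) 1) // invG T = j})) := by
      intro a b hab
      apply Subtype.ext
      exact psi_inj hn hm h23 h34 (congrArg Subtype.val hab)
    exact Nat.card_le_card_of_injective _ hinj
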